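/- Let 1 ≤ p < ∞ and let B_u, B_v be the weighted backward shifts on X = ℓ_p(ℤ₊) associated with weight sequences u and v. Assume that either (A) for every N ≥ 0, liminf_{n→∞} max_{0≤d≤N} |u₁⋯u_{n+d} / (v₁⋯v_{n+d})| = 0, or (B) for every N ≥ 0, limsup_{n→∞} min_{0≤d≤N} |u₁⋯u_{n+d} / (v₁⋯v_{n+d})| = ∞. Then B_u and B_v are orthogonal: for any Borel probability measures m_u, m_v on X with m_u B_u-invariant, m_v B_v-invariant and m_u({0}) = 0 = m_v({0}), the measures m_u and m_v are mutually singular. -/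

import Mathlib

open MeasureTheory Filter
open scoped ENNReal NNReal Topology

noncomputable instance {𝕂 : Type*} [RCLike 𝕂] {p : ℝ≥0∞} [Fact (1 ≤ p)] :
    MeasurableSpace (lp (fun _ : ℕ => 𝕂) p) := borel _

instance {𝕂 : Type*} [RCLike 𝕂] {p : ℝ≥0∞} [Fact (1 ≤ p)] :
    BorelSpace (lp (fun _ : ℕ => 𝕂) p) := ⟨rfl⟩

section Aux
variable {𝕂 : Type*} [RCLike 𝕂] {p : ℝ≥0∞} [Fact (1 ≤ p)]

lemma coord_continuous (d : ℕ) :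
    Continuous (fun x : lp (fun _ : ℕ => 𝕂) p => (x : ∀ _ : ℕ, 𝕂) d) := by
  have hp0 : p ≠ 0 := (lt_of_lt_of_le zero_lt_one (Fact.out : 1 ≤ p)).ne'
  refine (LipschitzWith.of_dist_le_mul (K := 1) fun f g => ?_).continuous
  have h := lp.norm_apply_le_norm hp0 (f - g) d
  simpa [dist_eq_norm, lp.coeFn_sub] using h

lemma iter_coord (w : ℕ → 𝕂) (B : lp (fun _ : ℕ => 𝕂) p →L[𝕂] lp (fun _ : ℕ => 𝕂) p)
    (hB : ∀ (x : lp (fun _ : ℕ => 𝕂) p) (m : ℕ),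
        (B x : ∀ _ : ℕ, 𝕂) m = w (m + 1) * (x : ∀ _ : ℕ, 𝕂) (m + 1)) (n : ℕ) :
    ∀ (x : lp (fun _ : ℕ => 𝕂) p) (d : ℕ),
      ((⇑B)^[n] x : ∀ _ : ℕ, 𝕂) d
        = (∏ i ∈ Finset.Ioc d (d + n), w i) * (x : ∀ _ : ℕ, 𝕂) (d + n) := by
  induction n with
  | zero => intro x d; simp
  | succ n ih =>
    intro x d
    rw [Function.iterate_succ_apply, ih (B x) d, hB x (d + n)]
    rw [show d + (n + 1) = (d + n) + 1 from rfl,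
      Finset.prod_Ioc_succ_top (Nat.le_add_right d n)]
    ring

lemma prod_split (w : ℕ → 𝕂) (d n : ℕ) :
    (∏ i ∈ Finset.Icc 1 (n + d), w i)
      = (∏ i ∈ Finset.Icc 1 d, w i) * ∏ i ∈ Finset.Ioc d (d + n), w i := by
  rw [show Finset.Icc 1 (n + d) = Finset.Ioc 0 (n + d) from Finset.Icc_add_one_left_eq_Ioc 0 (n + d),
    show Finset.Icc 1 d = Finset.Ioc 0 d from Finset.Icc_add_one_left_eq_Ioc 0 d, add_comm n d]
  exact (Finset.prod_Ioc_consecutive w (Nat.zero_le d) (Nat.le_add_right d n)).symm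

lemma inv_iter (B : lp (fun _ : ℕ => 𝕂) p →L[𝕂] lp (fun _ : ℕ => 𝕂) p)
    (m : Measure (lp (fun _ : ℕ => 𝕂) p))
    (hm : ∀ A, MeasurableSet A → m (⇑B ⁻¹' A) = m A) (n : ℕ)
    (A : Set (lp (fun _ : ℕ => 𝕂) p)) (hA : MeasurableSet A) :
    m ((⇑B)^[n] ⁻¹' A) = m A := by
  induction n with
  | zero => simp
  | succ n ih =>
    rw [Function.iterate_succ, Set.preimage_comp,
      hm _ ((B.continuous.measurable.iterate n) hA), ih]

lemma key (u v : ℕ → 𝕂)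
    (hu0 : ∀ n, 1 ≤ n → u n ≠ 0) (hv0 : ∀ n, 1 ≤ n → v n ≠ 0)
    (Bu Bv : lp (fun _ : ℕ => 𝕂) p →L[𝕂] lp (fun _ : ℕ => 𝕂) p)
    (hBu : ∀ (x : lp (fun _ : ℕ => 𝕂) p) (m : ℕ),
        (Bu x : ∀ _ : ℕ, 𝕂) m = u (m + 1) * (x : ∀ _ : ℕ, 𝕂) (m + 1))
    (hBv : ∀ (x : lp (fun _ : ℕ => 𝕂) p) (m : ℕ),
        (Bv x : ∀ _ : ℕ, 𝕂) m = v (m + 1) * (x : ∀ _ : ℕ, 𝕂) (m + 1))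
    (hr : ∀ N : ℕ, ∀ ε : ℝ, 0 < ε → ∃ᶠ n in atTop, ∀ d ≤ N,
        ‖∏ i ∈ Finset.Icc 1 (n + d), u i‖ / ‖∏ i ∈ Finset.Icc 1 (n + d), v i‖ < ε)
    (mu mv : Measure (lp (fun _ : ℕ => 𝕂) p))
    [IsProbabilityMeasure mu] [IsProbabilityMeasure mv]
    (hmu : ∀ A : Set (lp (fun _ : ℕ => 𝕂) p), MeasurableSet A → mu (Bu ⁻¹' A) = mu A)
    (hmv : ∀ A : Set (lp (fun _ : ℕ => 𝕂) p), MeasurableSet A → mv (Bv ⁻¹' A) = mv A)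
    (hzero_u : mu {0} = 0) :
    mu.MutuallySingular mv := by
  set X := lp (fun _ : ℕ => 𝕂) p with hX
  set Pu : ℕ → 𝕂 := fun m => ∏ i ∈ Finset.Icc 1 m, u i with hPudef
  set Pv : ℕ → 𝕂 := fun m => ∏ i ∈ Finset.Icc 1 m, v i with hPvdef
  have hPu : ∀ m, Pu m ≠ 0 := fun m =>
    Finset.prod_ne_zero_iff.mpr fun i hi => hu0 i (Finset.mem_Icc.mp hi).1
  have hPv : ∀ m, Pv m ≠ 0 := fun m =>
    Finset.prod_ne_zero_iff.mpr fun i hi => hv0 i (Finset.mem_Icc.mp hi).1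
  -- the shrinking "small first coordinates" sets
  set V : ℕ → Set X :=
    (fun m => {y : X | ∀ d ≤ m, ‖Pu d‖ * ‖(y : ∀ _ : ℕ, 𝕂) d‖ < 1 / ((m : ℝ) + 1)}) with hVdef
  have hVmeas : ∀ m, MeasurableSet (V m) := by
    intro m
    have : V m = ⋂ d ∈ Finset.range (m + 1),
        {y : X | ‖Pu d‖ * ‖(y : ∀ _ : ℕ, 𝕂) d‖ < 1 / ((m : ℝ) + 1)} := by
      ext y
      simp [hVdef, Nat.lt_succ_iff]
    rw [this]
    refine Finset.measurableSet_biInter _ fun d _ => ?_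
    exact measurableSet_lt
      (measurable_const.mul ((coord_continuous d).measurable.norm)) measurable_const
  have hVanti : Antitone V := by
    intro a b hab y hy d hd
    refine lt_of_lt_of_le (hy d (hd.trans hab)) ?_
    apply one_div_le_one_div_of_le (by positivity)
    have : (a : ℝ) ≤ b := Nat.cast_le.mpr hab
    linarith
  have hVint : (⋂ m, V m) ⊆ {(0 : X)} := by
    intro y hy
    simp only [Set.mem_iInter] at hy
    have hy0 : ∀ d, (y : ∀ _ : ℕ, 𝕂) d = 0 := by
      intro d
      by_contra h
      have hpos : 0 < ‖Pu d‖ * ‖(y : ∀ _ : ℕ, 𝕂) d‖ :=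
        mul_pos (norm_pos_iff.mpr (hPu d)) (norm_pos_iff.mpr h)
      obtain ⟨m, hm⟩ := exists_nat_one_div_lt hpos
      have h2 := hy (max m d) d (le_max_right m d)
      have h3 : 1 / ((max m d : ℕ) + 1 : ℝ) ≤ 1 / ((m : ℝ) + 1) := by
        apply one_div_le_one_div_of_le (by positivity)
        have : (m : ℝ) ≤ ((max m d : ℕ) : ℝ) := Nat.cast_le.mpr (le_max_left m d)
        linarith
      linarith
    have hyz : y = 0 := by
      apply lp.ext
      rw [lp.coeFn_zero]
      exact funext hy0
    simp [hyz]
  have hV0 : Tendsto (fun m => mu (V m)) atTop (𝓝 0) := by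
    have h := tendsto_measure_iInter_atTop (μ := mu)
      (fun m => (hVmeas m).nullMeasurableSet) hVanti ⟨0, measure_ne_top _ _⟩
    have hz : mu (⋂ m, V m) = 0 :=
      le_antisymm (le_trans (measure_mono hVint) hzero_u.le) zero_le
    rw [hz] at h
    exact h
  -- tail sets for the norm under mv
  set W : ℕ → Set X := (fun c => {y : X | (c : ℝ) < ‖y‖}) with hWdef
  have hWmeas : ∀ c, MeasurableSet (W c) :=
    fun c => measurableSet_lt measurable_const measurable_norm
  have hWanti : Antitone W := by
    intro a b hab y hy
    simp only [hWdef, Set.mem_setOf_eq] at hy ⊢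
    exact lt_of_le_of_lt (by exact_mod_cast hab) hy
  have hWint : (⋂ c, W c) = (∅ : Set X) := by
    ext y
    simp only [Set.mem_iInter, Set.mem_empty_iff_false, iff_false, not_forall]
    obtain ⟨c, hc⟩ := exists_nat_gt ‖y‖
    exact ⟨c, not_lt.mpr hc.le⟩
  have hW0 : Tendsto (fun c => mv (W c)) atTop (𝓝 0) := by
    have h := tendsto_measure_iInter_atTop (μ := mv)
      (fun c => (hWmeas c).nullMeasurableSet) hWanti ⟨0, measure_ne_top _ _⟩
    rw [hWint, measure_empty] at h
    exact h
  -- the main choice of parameters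
  have main : ∀ k : ℕ, ∃ N C n : ℕ, mu (V N) < 2⁻¹ ^ k ∧ mv (W C) < 2⁻¹ ^ k ∧ k ≤ n ∧
      ∀ d ≤ N, ‖Pu (n + d)‖ / ‖Pv (n + d)‖ <
        (1 / ((N : ℝ) + 1)) /
          (((∑ j ∈ Finset.range (N + 1), ‖Pv j‖) + 1) * ((C : ℝ) + 1)) := by
    intro k
    have hp2 : (0 : ℝ≥0∞) < 2⁻¹ ^ k :=
      ENNReal.pow_pos (ENNReal.inv_pos.mpr (by norm_num)) k
    obtain ⟨N, hN⟩ := (hV0.eventually (Iio_mem_nhds hp2)).exists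
    obtain ⟨C, hC⟩ := (hW0.eventually (Iio_mem_nhds hp2)).exists
    have hQpos : (0 : ℝ) < (∑ j ∈ Finset.range (N + 1), ‖Pv j‖) + 1 := by
      have : (0 : ℝ) ≤ ∑ j ∈ Finset.range (N + 1), ‖Pv j‖ :=
        Finset.sum_nonneg fun j _ => norm_nonneg _
      linarith
    have hεpos : 0 < (1 / ((N : ℝ) + 1)) /
        (((∑ j ∈ Finset.range (N + 1), ‖Pv j‖) + 1) * ((C : ℝ) + 1)) := by
      apply div_pos (by positivity)
      apply mul_pos hQpos (by positivity)
    obtain ⟨n, hn1, hn2⟩ := ((hr N _ hεpos).and_eventually (eventually_ge_atTop k)).exists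
    exact ⟨N, C, n, hN, hC, hn2, hn1⟩
  choose N C n hVk hWk hkn hεk using main
  -- the separating sets
  set Miss : ℕ → Set X := (fun k => {x : X | ∀ d ≤ N k,
      ‖Pu (n k + d)‖ * ‖(x : ∀ _ : ℕ, 𝕂) (n k + d)‖ < 1 / ((N k : ℝ) + 1)}) with hMissdef
  have hMissEq : ∀ k, Miss k = (⇑Bu)^[n k] ⁻¹' (V (N k)) := by
    intro k
    ext x
    simp only [hMissdef, hVdef, Set.mem_setOf_eq, Set.mem_preimage]
    refine forall₂_congr fun d hd => ?_
    have h1 : ‖Pu d‖ * ‖(((⇑Bu)^[n k] x : X) : ∀ _ : ℕ, 𝕂) d‖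
        = ‖Pu (n k + d)‖ * ‖(x : ∀ _ : ℕ, 𝕂) (n k + d)‖ := by
      rw [iter_coord u Bu hBu (n k) x d, norm_mul, ← mul_assoc,
        ← norm_mul (Pu d) (∏ i ∈ Finset.Ioc d (d + n k), u i),
        ← prod_split u d (n k), add_comm d (n k)]
    rw [h1]
  have hMissMeas : ∀ k, MeasurableSet (Miss k) := by
    intro k
    rw [hMissEq k]
    exact (Bu.continuous.measurable.iterate (n k)) (hVmeas (N k))
  have hMissMu : ∀ k, mu (Miss k) < 2⁻¹ ^ k := by
    intro k
    rw [hMissEq k, inv_iter Bu mu hmu (n k) _ (hVmeas (N k))]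
    exact hVk k
  -- if the n k-th iterate under Bv has moderate norm then x ∈ Miss k
  have hBclaim : ∀ k (x : X), ‖(⇑Bv)^[n k] x‖ ≤ (C k : ℝ) → x ∈ Miss k := by
    intro k x hx d hd
    have hp0 : p ≠ 0 := (lt_of_lt_of_le zero_lt_one (Fact.out : 1 ≤ p)).ne'
    set Qk : ℝ := (∑ j ∈ Finset.range (N k + 1), ‖Pv j‖) + 1 with hQk
    have hQpos : (0 : ℝ) < Qk := by
      have : (0 : ℝ) ≤ ∑ j ∈ Finset.range (N k + 1), ‖Pv j‖ :=
        Finset.sum_nonneg fun j _ => norm_nonneg _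
      simp only [hQk]; linarith
    have hPvd : ‖Pv d‖ ≤ Qk := by
      have h1 : ‖Pv d‖ ≤ ∑ j ∈ Finset.range (N k + 1), ‖Pv j‖ :=
        Finset.single_le_sum (f := fun j => ‖Pv j‖) (fun j _ => norm_nonneg _)
          (Finset.mem_range.mpr (Nat.lt_succ_of_le hd))
      simp only [hQk]; linarith
    have h2 : ‖Pv (n k + d)‖ * ‖(x : ∀ _ : ℕ, 𝕂) (n k + d)‖
        = ‖Pv d‖ * ‖(((⇑Bv)^[n k] x : X) : ∀ _ : ℕ, 𝕂) d‖ := by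
      rw [iter_coord v Bv hBv (n k) x d, norm_mul, ← mul_assoc,
        ← norm_mul (Pv d) (∏ i ∈ Finset.Ioc d (d + n k), v i),
        ← prod_split v d (n k), add_comm d (n k)]
    have hcoord : ‖(((⇑Bv)^[n k] x : X) : ∀ _ : ℕ, 𝕂) d‖ ≤ (C k : ℝ) :=
      le_trans (lp.norm_apply_le_norm hp0 _ d) hx
    have hvnz : (0 : ℝ) < ‖Pv (n k + d)‖ := norm_pos_iff.mpr (hPv _)
    have hkey : ‖Pu (n k + d)‖ * ‖(x : ∀ _ : ℕ, 𝕂) (n k + d)‖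
        = (‖Pu (n k + d)‖ / ‖Pv (n k + d)‖)
          * (‖Pv (n k + d)‖ * ‖(x : ∀ _ : ℕ, 𝕂) (n k + d)‖) := by
      field_simp
    rw [hkey, h2]
    have hF : ‖Pv d‖ * ‖(((⇑Bv)^[n k] x : X) : ∀ _ : ℕ, 𝕂) d‖ ≤ Qk * (C k : ℝ) :=
      mul_le_mul hPvd hcoord (norm_nonneg _) (le_of_lt hQpos)
    have hr0 : (0 : ℝ) ≤ ‖Pu (n k + d)‖ / ‖Pv (n k + d)‖ :=
      div_nonneg (norm_nonneg _) (norm_nonneg _)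
    calc (‖Pu (n k + d)‖ / ‖Pv (n k + d)‖)
          * (‖Pv d‖ * ‖(((⇑Bv)^[n k] x : X) : ∀ _ : ℕ, 𝕂) d‖)
        ≤ (‖Pu (n k + d)‖ / ‖Pv (n k + d)‖) * (Qk * (C k : ℝ)) :=
          mul_le_mul_of_nonneg_left hF hr0
      _ ≤ ((1 / ((N k : ℝ) + 1)) / (Qk * ((C k : ℝ) + 1))) * (Qk * (C k : ℝ)) := by
          apply mul_le_mul_of_nonneg_right (le_of_lt (hεk k d hd))
          positivity
      _ < 1 / ((N k : ℝ) + 1) := by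
          rw [div_mul_eq_mul_div, div_lt_iff₀ (by positivity)]
          have hlt : Qk * (C k : ℝ) < Qk * ((C k : ℝ) + 1) :=
            mul_lt_mul_of_pos_left (by linarith) hQpos
          have hδ : (0 : ℝ) < 1 / ((N k : ℝ) + 1) := by positivity
          calc 1 / ((N k : ℝ) + 1) * (Qk * (C k : ℝ))
              < 1 / ((N k : ℝ) + 1) * (Qk * ((C k : ℝ) + 1)) :=
                mul_lt_mul_of_pos_left hlt hδ
            _ = _ := by ring
  -- assemble
  have hgeom : (∑' k : ℕ, (2 : ℝ≥0∞)⁻¹ ^ k) ≠ ⊤ := by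
    rw [ENNReal.tsum_geometric]
    simp [ENNReal.one_sub_inv_two]
  refine ⟨limsup Miss atTop, MeasurableSet.measurableSet_limsup hMissMeas, ?_, ?_⟩
  · apply measure_limsup_atTop_eq_zero
    exact ne_top_of_le_ne_top hgeom (ENNReal.tsum_le_tsum fun k => (hMissMu k).le)
  · set G : ℕ → Set X := (fun k => (⇑Bv)^[n k] ⁻¹' (W (C k))) with hGdef
    have hGmu : mv (limsup G atTop) = 0 := by
      apply measure_limsup_atTop_eq_zero
      refine ne_top_of_le_ne_top hgeom (ENNReal.tsum_le_tsum fun k => ?_)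
      rw [hGdef]
      rw [inv_iter Bv mv hmv (n k) _ (hWmeas (C k))]
      exact (hWk k).le
    refine measure_mono_null (fun x hx => ?_) hGmu
    rw [Set.mem_compl_iff, mem_limsup_iff_frequently_mem, Filter.not_frequently] at hx
    rw [mem_limsup_iff_frequently_mem]
    refine (hx.mono fun k hk => ?_).frequently
    simp only [hGdef, Set.mem_preimage, hWdef, Set.mem_setOf_eq]
    by_contra hcon
    exact hk (hBclaim k x (not_lt.mp hcon))

end Aux


/-- If for every `N`, `liminf_n max_{0≤d≤N} |u₁⋯u_{n+d}/(v₁⋯v_{n+d})| = 0`, or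
for every `N`, `limsup_n min_{0≤d≤N} |u₁⋯u_{n+d}/(v₁⋯v_{n+d})| = ∞`, then `B_u` and `B_v` are
orthogonal: invariant probability measures not charging `{0}` are mutually singular. -/
theorem orthogonal_of_blocks
    {𝕂 : Type*} [RCLike 𝕂] (p : ℝ≥0∞) [Fact (1 ≤ p)] (hp : p ≠ ⊤)
    (u v : ℕ → 𝕂) (hu0 : ∀ n, 1 ≤ n → u n ≠ 0) (hv0 : ∀ n, 1 ≤ n → v n ≠ 0)
    (hubdd : ∃ M : ℝ, ∀ n, ‖u n‖ ≤ M) (hvbdd : ∃ M : ℝ, ∀ n, ‖v n‖ ≤ M)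
    (Bu Bv : lp (fun _ : ℕ => 𝕂) p →L[𝕂] lp (fun _ : ℕ => 𝕂) p)
    (hBu : ∀ (x : lp (fun _ : ℕ => 𝕂) p) (n : ℕ),
        (Bu x : ∀ _ : ℕ, 𝕂) n = u (n + 1) * (x : ∀ _ : ℕ, 𝕂) (n + 1))
    (hBv : ∀ (x : lp (fun _ : ℕ => 𝕂) p) (n : ℕ),
        (Bv x : ∀ _ : ℕ, 𝕂) n = v (n + 1) * (x : ∀ _ : ℕ, 𝕂) (n + 1))
    (hratio :
      (∀ N : ℕ, ∀ ε : ℝ, 0 < ε → ∃ᶠ n in atTop, ∀ d ≤ N,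
          ‖∏ i ∈ Finset.Icc 1 (n + d), u i‖ / ‖∏ i ∈ Finset.Icc 1 (n + d), v i‖ < ε) ∨
      (∀ N : ℕ, ∀ M : ℝ, ∃ᶠ n in atTop, ∀ d ≤ N,
          M < ‖∏ i ∈ Finset.Icc 1 (n + d), u i‖ / ‖∏ i ∈ Finset.Icc 1 (n + d), v i‖))
    (mu mv : Measure (lp (fun _ : ℕ => 𝕂) p))
    [IsProbabilityMeasure mu] [IsProbabilityMeasure mv]
    (hmu : ∀ A : Set (lp (fun _ : ℕ => 𝕂) p), MeasurableSet A → mu (Bu ⁻¹' A) = mu A)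
    (hmv : ∀ A : Set (lp (fun _ : ℕ => 𝕂) p), MeasurableSet A → mv (Bv ⁻¹' A) = mv A)
    (hzero_u : mu {0} = 0) (hzero_v : mv {0} = 0) :
    mu.MutuallySingular mv := by
  rcases hratio with hA | hB
  · exact key u v hu0 hv0 Bu Bv hBu hBv hA mu mv hmu hmv hzero_u
  · refine (key v u hv0 hu0 Bv Bu hBv hBu ?_ mv mu hmv hmu hzero_v).symm
    intro N ε hε
    refine (hB N ε⁻¹).mono fun n hn d hd => ?_
    have h := hn d hd
    have hvpos : (0 : ℝ) < ‖∏ i ∈ Finset.Icc 1 (n + d), v i‖ :=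
      norm_pos_iff.mpr (Finset.prod_ne_zero_iff.mpr fun i hi => hv0 i (Finset.mem_Icc.mp hi).1)
    have h' : ε⁻¹ * ‖∏ i ∈ Finset.Icc 1 (n + d), v i‖ < ‖∏ i ∈ Finset.Icc 1 (n + d), u i‖ :=
      (lt_div_iff₀ hvpos).mp h
    have hupos : (0 : ℝ) < ‖∏ i ∈ Finset.Icc 1 (n + d), u i‖ :=
      lt_trans (by positivity) h'
    rw [div_lt_iff₀ hupos]
    have h2 := mul_lt_mul_of_pos_left h' hε
    rwa [← mul_assoc, mul_inv_cancel₀ hε.ne', one_mul] at h2
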